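/- Let I be a finite index set and let p, q : I → ℝ be nonnegative functions with Σ_i p_i = 1 and Σ_i q_i = 1. Then the maximum, over all nonnegative r : I → ℝ with Σ_i r_i = 1, of Σ_i (p_i q_i r_i)^{1/3} equals (Σ_i √(p_i q_i))^{2/3}, and (when Σ_i √(p_i q_i) > 0) it is attained at r_i = √(p_i q_i) / Σ_j √(p_j q_j). -/

import Mathlib

open Matrix BigOperators
open scoped ComplexOrder

/-- A density matrix: positive semidefinite with trace 1. -/
def IsDensityMatrix {d : Type*} [Fintype d] [DecidableEq d]
    (ρ : Matrix d d ℂ) : Prop :=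
  ρ.PosSemidef ∧ ρ.trace = 1

/-- The compatibility `C(ρA, ρB)`: the supremum, over all finite families of density
matrices `σ` and weight vectors `p`, `q` (nonnegative, summing to 1) with
`∑ i, p i • σ i = ρA` and `∑ i, q i • σ i = ρB`, of the Bhattacharyya overlap
`∑ i, √(p i * q i)`. -/
noncomputable def compat {d : Type*} [Fintype d] [DecidableEq d]
    (ρA ρB : Matrix d d ℂ) : ℝ :=
  sSup { c : ℝ | ∃ (m : ℕ) (σ : Fin m → Matrix d d ℂ) (p q : Fin m → ℝ),
    (∀ i, IsDensityMatrix (σ i)) ∧ (∀ i, 0 ≤ p i) ∧ (∀ i, 0 ≤ q i) ∧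
    ∑ i, p i = 1 ∧ ∑ i, q i = 1 ∧
    ∑ i, p i • σ i = ρA ∧ ∑ i, q i • σ i = ρB ∧
    c = ∑ i, Real.sqrt (p i * q i) }

open scoped Classical in
/-- The positive semidefinite square root of a positive semidefinite matrix
(junk value `0` on non-PSD matrices). -/
noncomputable def psdSqrt {d : Type*} [Fintype d] [DecidableEq d]
    (A : Matrix d d ℂ) : Matrix d d ℂ :=
  if h : A.PosSemidef then
    (h.1.eigenvectorUnitary : Matrix d d ℂ) * diagonal ((↑) ∘ Real.sqrt ∘ h.1.eigenvalues) *
      (star (h.1.eigenvectorUnitary : Matrix d d ℂ))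
  else 0

/-- The fidelity `F(ρA, ρB) = Tr √(√ρA ρB √ρA)`. -/
noncomputable def fidelity {d : Type*} [Fintype d] [DecidableEq d]
    (ρA ρB : Matrix d d ℂ) : ℝ :=
  (psdSqrt (psdSqrt ρA * ρB * psdSqrt ρA)).trace.re

/-- The pure-state density matrix `|ψ⟩⟨ψ|` associated to a vector `ψ`. -/
def pureState {d : Type*} [Fintype d] [DecidableEq d] (ψ : d → ℂ) : Matrix d d ℂ :=
  Matrix.vecMulVec ψ (star ψ)


lemma attain_aux {I : Type*} [Fintype I] (p q : I → ℝ) (hpq : ∀ i, 0 ≤ p i * q i)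
    (hS : 0 < ∑ j, Real.sqrt (p j * q j)) :
    ∑ i, (p i * q i * (Real.sqrt (p i * q i) / ∑ j, Real.sqrt (p j * q j)))
        ^ ((1 : ℝ) / 3)
      = (∑ i, Real.sqrt (p i * q i)) ^ ((2 : ℝ) / 3) := by
  set S := ∑ j, Real.sqrt (p j * q j) with hSdef
  have h1 : ∀ i, (p i * q i * (Real.sqrt (p i * q i) / S)) ^ ((1 : ℝ) / 3)
      = Real.sqrt (p i * q i) / S ^ ((1 : ℝ) / 3) := by
    intro i
    have ha : (0:ℝ) ≤ Real.sqrt (p i * q i) := Real.sqrt_nonneg _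
    have hx : p i * q i = Real.sqrt (p i * q i) ^ 2 := (Real.sq_sqrt (hpq i)).symm
    have key : p i * q i * (Real.sqrt (p i * q i) / S)
        = Real.sqrt (p i * q i) ^ (3:ℕ) / S := by
      rw [hx]; field_simp; rw [Real.sqrt_sq ha]; ring
    rw [key, Real.div_rpow (pow_nonneg ha _) hS.le, ← Real.rpow_natCast (Real.sqrt _) 3,
      ← Real.rpow_mul ha]
    norm_num
  rw [Finset.sum_congr rfl fun i _ => h1 i, ← Finset.sum_div, ← hSdef]
  rw [show S / S ^ ((1:ℝ)/3) = S ^ ((1:ℝ)) / S ^ ((1:ℝ)/3) by rw [Real.rpow_one],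
    ← Real.rpow_sub hS]
  norm_num

lemma ub_aux {I : Type*} [Fintype I] (p q : I → ℝ) (hpq : ∀ i, 0 ≤ p i * q i)
    (r : I → ℝ) (hr : ∀ i, 0 ≤ r i) (hr1 : ∑ i, r i = 1) :
    ∑ i, (p i * q i * r i) ^ ((1 : ℝ) / 3)
      ≤ (∑ i, Real.sqrt (p i * q i)) ^ ((2 : ℝ) / 3) := by
  have hconj : Real.HolderConjugate (3/2) 3 := ⟨by norm_num, by norm_num, by norm_num⟩
  have hterm : ∀ i, (p i * q i * r i) ^ ((1 : ℝ) / 3)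
      = Real.sqrt (p i * q i) ^ ((2:ℝ)/3) * r i ^ ((1:ℝ)/3) := by
    intro i
    have ha : (0:ℝ) ≤ Real.sqrt (p i * q i) := Real.sqrt_nonneg _
    have hx : p i * q i = Real.sqrt (p i * q i) ^ (2:ℕ) := (Real.sq_sqrt (hpq i)).symm
    rw [hx, Real.mul_rpow (pow_nonneg ha _) (hr i), ← Real.rpow_natCast (Real.sqrt _) 2,
      ← Real.rpow_mul ha]
    norm_num
  rw [Finset.sum_congr rfl fun i _ => hterm i]
  calc ∑ i, Real.sqrt (p i * q i) ^ ((2:ℝ)/3) * r i ^ ((1:ℝ)/3)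
      ≤ (∑ i, (Real.sqrt (p i * q i) ^ ((2:ℝ)/3)) ^ ((3:ℝ)/2)) ^ (1/(3/2:ℝ))
        * (∑ i, (r i ^ ((1:ℝ)/3)) ^ (3:ℝ)) ^ (1/(3:ℝ)) :=
        Real.inner_le_Lp_mul_Lq_of_nonneg _ hconj
          (fun i _ => Real.rpow_nonneg (Real.sqrt_nonneg _) _)
          (fun i _ => Real.rpow_nonneg (hr i) _)
    _ = (∑ i, Real.sqrt (p i * q i)) ^ ((2 : ℝ) / 3) := by
        have e1 : ∀ i, (Real.sqrt (p i * q i) ^ ((2:ℝ)/3)) ^ ((3:ℝ)/2)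
            = Real.sqrt (p i * q i) := by
          intro i
          rw [← Real.rpow_mul (Real.sqrt_nonneg _)]; norm_num
        have e2 : ∀ i, (r i ^ ((1:ℝ)/3)) ^ (3:ℝ) = r i := by
          intro i
          rw [← Real.rpow_mul (hr i)]; norm_num
        rw [Finset.sum_congr rfl fun i _ => e1 i, Finset.sum_congr rfl fun i _ => e2 i, hr1]
        norm_num

/-- For probability distributions `p`, `q`, the maximum over probability
distributions `r` of the three-way overlap `∑ i, (p i * q i * r i)^(1/3)` equals
`(∑ i, √(p i * q i))^(2/3)`, and (when `∑ i, √(p i * q i) > 0`) it is attained at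
`r i = √(p i * q i) / ∑ j, √(p j * q j)`. -/
theorem threeway_overlap_isGreatest {I : Type*} [Fintype I]
    (p q : I → ℝ) (hp : ∀ i, 0 ≤ p i) (hq : ∀ i, 0 ≤ q i)
    (hp1 : ∑ i, p i = 1) (hq1 : ∑ i, q i = 1) :
    IsGreatest { s : ℝ | ∃ r : I → ℝ, (∀ i, 0 ≤ r i) ∧ ∑ i, r i = 1 ∧
        s = ∑ i, (p i * q i * r i) ^ ((1 : ℝ) / 3) }
      ((∑ i, Real.sqrt (p i * q i)) ^ ((2 : ℝ) / 3)) ∧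
    (0 < ∑ i, Real.sqrt (p i * q i) →
      ∑ i, (p i * q i * (Real.sqrt (p i * q i) / ∑ j, Real.sqrt (p j * q j)))
          ^ ((1 : ℝ) / 3)
        = (∑ i, Real.sqrt (p i * q i)) ^ ((2 : ℝ) / 3)) := by
  have hpq : ∀ i, 0 ≤ p i * q i := fun i => mul_nonneg (hp i) (hq i)
  set S := ∑ j, Real.sqrt (p j * q j) with hSdef
  have hS0 : 0 ≤ S := Finset.sum_nonneg fun i _ => Real.sqrt_nonneg _
  refine ⟨⟨?_, ?_⟩, fun hS => attain_aux p q hpq hS⟩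
  · rcases lt_or_eq_of_le hS0 with hS | hS
    · refine ⟨fun i => Real.sqrt (p i * q i) / S, fun i => by positivity, ?_,
        (attain_aux p q hpq hS).symm⟩
      rw [← Finset.sum_div, ← hSdef, div_self hS.ne']
    · have hz : ∀ i, p i * q i = 0 := by
        intro i
        have h0 := (Finset.sum_eq_zero_iff_of_nonneg
          (fun i _ => Real.sqrt_nonneg (p i * q i))).mp hS.symm i (Finset.mem_univ i)
        calc p i * q i = Real.sqrt (p i * q i) ^ 2 := (Real.sq_sqrt (hpq i)).symm
          _ = 0 := by rw [h0]; ring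
      refine ⟨p, hp, hp1, ?_⟩
      rw [← hS, Real.zero_rpow (by norm_num)]
      refine (Finset.sum_eq_zero fun i _ => ?_).symm
      rw [hz i, zero_mul, Real.zero_rpow (by norm_num)]
  · rintro s ⟨r, hr, hr1, rfl⟩
    exact ub_aux p q hpq r hr hr1
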